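/- Let X and Y be real Banach spaces, U ⊆ X an open set, and f : U → Y a continuously differentiable map. Let x₀ ∈ U and suppose D := df(x₀) : X → Y is surjective and admits a bounded linear right inverse Q : Y → X (i.e. D ∘ Q = id_Y). Let δ > 0 and C > 0 be constants such that ‖Q‖ ≤ C, the closed ball of radius δ centered at x₀ is contained in U, and for every x with ‖x − x₀‖ ≤ δ one has ‖df(x) − D‖ ≤ 1/(2C). Suppose x₁ ∈ X satisfies ‖x₁ − x₀‖ ≤ δ/8 and ‖f(x₁)‖ ≤ δ/(4C). Then there exists a unique x ∈ X such that f(x) = 0, x − x₁ lies in the range of Q, and ‖x − x₀‖ ≤ δ; moreover this x satisfies ‖x − x₁‖ ≤ 2C·‖f(x₁)‖. -/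

import Mathlib

/-- Implicit function theorem with quantitative bounds (Theorem A.3.4 in McDuff–Salamon). -/
theorem stmt_0
    {X Y : Type*} [NormedAddCommGroup X] [NormedSpace ℝ X] [CompleteSpace X]
    [NormedAddCommGroup Y] [NormedSpace ℝ Y] [CompleteSpace Y]
    (U : Set X) (hU : IsOpen U) (f : X → Y) (df : X → X →L[ℝ] Y)
    (hdf : ∀ x ∈ U, HasFDerivAt f (df x) x) (hdfc : ContinuousOn df U)
    (x₀ : X) (hx₀U : x₀ ∈ U)
    (hsurj : Function.Surjective (df x₀))
    (Q : Y →L[ℝ] X) (hQright : ∀ y : Y, df x₀ (Q y) = y)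
    (δ C : ℝ) (hδ : 0 < δ) (hC : 0 < C)
    (hQnorm : ‖Q‖ ≤ C)
    (hball : Metric.closedBall x₀ δ ⊆ U)
    (hquad : ∀ x : X, ‖x - x₀‖ ≤ δ → ‖df x - df x₀‖ ≤ 1 / (2 * C))
    (x₁ : X) (hx₁ : ‖x₁ - x₀‖ ≤ δ / 8) (hfx₁ : ‖f x₁‖ ≤ δ / (4 * C)) :
    ∃ x : X, (f x = 0 ∧ x - x₁ ∈ Set.range Q ∧ ‖x - x₀‖ ≤ δ) ∧
      ‖x - x₁‖ ≤ 2 * C * ‖f x₁‖ ∧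
      ∀ x' : X, (f x' = 0 ∧ x' - x₁ ∈ Set.range Q ∧ ‖x' - x₀‖ ≤ δ) → x' = x := by
  set r : ℝ := 2 * C * ‖f x₁‖ with hr
  have hr0 : 0 ≤ r := by positivity
  have hrδ : r ≤ δ / 2 := by
    have : 2 * C * ‖f x₁‖ ≤ 2 * C * (δ / (4 * C)) := by gcongr
    calc r ≤ 2 * C * (δ / (4 * C)) := this
      _ = δ / 2 := by field_simp; ring
  -- points near x₁ are in the δ-ball around x₀
  have hSball : ∀ x : X, ‖x - x₁‖ ≤ r → ‖x - x₀‖ ≤ δ := by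
    intro x hx
    have h1 : ‖x - x₀‖ ≤ ‖x - x₁‖ + ‖x₁ - x₀‖ := norm_sub_le_norm_sub_add_norm_sub x x₁ x₀
    linarith
  -- mean value estimate
  have hkey : ∀ a ∈ Metric.closedBall x₀ δ, ∀ b ∈ Metric.closedBall x₀ δ,
      ‖f b - f a - (df x₀) (b - a)‖ ≤ 1 / (2 * C) * ‖b - a‖ := by
    intro a ha b hb
    refine (convex_closedBall x₀ δ).norm_image_sub_le_of_norm_hasFDerivWithin_le'
      (f' := df) (fun z hz => (hdf z (hball hz)).hasFDerivWithinAt)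
      (fun z hz => hquad z (by simpa [Metric.mem_closedBall, dist_eq_norm] using hz)) ha hb
  set φ : X → X := fun x => x - Q (f x) with hφ
  -- contraction property
  have hcontr : ∀ a b : X, ‖a - x₀‖ ≤ δ → ‖b - x₀‖ ≤ δ → a - b ∈ Set.range Q →
      ‖φ a - φ b‖ ≤ 1 / 2 * ‖a - b‖ := by
    intro a b ha hb hab
    obtain ⟨z, hz⟩ := hab
    have hDba : (df x₀) (b - a) = -z := by
      have h1 : b - a = Q (-z) := by rw [map_neg, hz]; abel
      rw [h1, hQright]
    have heq : φ a - φ b = Q (f b - f a - (df x₀) (b - a)) := by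
      rw [hDba]
      have h2 : a = Q z + b := by rw [hz]; abel
      simp only [hφ, h2, map_sub, map_neg, sub_neg_eq_add, map_add]
      abel
    have hma : a ∈ Metric.closedBall x₀ δ := by
      simpa [Metric.mem_closedBall, dist_eq_norm] using ha
    have hmb : b ∈ Metric.closedBall x₀ δ := by
      simpa [Metric.mem_closedBall, dist_eq_norm] using hb
    calc ‖φ a - φ b‖ = ‖Q (f b - f a - (df x₀) (b - a))‖ := by rw [heq]
      _ ≤ ‖Q‖ * ‖f b - f a - (df x₀) (b - a)‖ := Q.le_opNorm _
      _ ≤ C * (1 / (2 * C) * ‖b - a‖) := by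
          apply mul_le_mul hQnorm (hkey a hma b hmb) (norm_nonneg _) hC.le
      _ = 1 / 2 * ‖a - b‖ := by rw [norm_sub_rev b a]; field_simp
  -- range Q is closed
  have hQanti : AntilipschitzWith ‖df x₀‖₊ Q := by
    apply ContinuousLinearMap.antilipschitz_of_bound
    intro y
    calc ‖y‖ = ‖(df x₀) (Q y)‖ := by rw [hQright]
      _ ≤ ‖df x₀‖ * ‖Q y‖ := (df x₀).le_opNorm _
  have hQclosed : IsClosed (Set.range Q) := hQanti.isClosed_range Q.uniformContinuous
  set S : Set X := Metric.closedBall x₁ r ∩ {x | x - x₁ ∈ Set.range Q} with hS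
  have hSclosed : IsClosed S :=
    Metric.isClosed_closedBall.inter (hQclosed.preimage (continuous_id.sub continuous_const))
  have hx₁S : x₁ ∈ S := by
    constructor
    · exact Metric.mem_closedBall_self hr0
    · exact ⟨0, by simp⟩
  have hx₁ball : ‖x₁ - x₀‖ ≤ δ := by linarith
  -- membership facts for S
  have hSmem : ∀ x ∈ S, ‖x - x₁‖ ≤ r ∧ x - x₁ ∈ Set.range Q := by
    intro x hx
    exact ⟨by simpa [Metric.mem_closedBall, dist_eq_norm] using hx.1, hx.2⟩
  have hφx₁ : ‖φ x₁ - x₁‖ ≤ C * ‖f x₁‖ := by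
    have : φ x₁ - x₁ = -(Q (f x₁)) := by simp [hφ]
    rw [this, norm_neg]
    calc ‖Q (f x₁)‖ ≤ ‖Q‖ * ‖f x₁‖ := Q.le_opNorm _
      _ ≤ C * ‖f x₁‖ := by gcongr
  have hmaps : ∀ x ∈ S, φ x ∈ S := by
    intro x hx
    obtain ⟨hxr, w, hw⟩ := hSmem x hx
    constructor
    · rw [Metric.mem_closedBall, dist_eq_norm]
      have h1 : ‖φ x - φ x₁‖ ≤ 1 / 2 * ‖x - x₁‖ :=
        hcontr x x₁ (hSball x hxr) hx₁ball ⟨w, hw⟩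
      calc ‖φ x - x₁‖ ≤ ‖φ x - φ x₁‖ + ‖φ x₁ - x₁‖ := norm_sub_le_norm_sub_add_norm_sub _ _ _
        _ ≤ 1 / 2 * ‖x - x₁‖ + C * ‖f x₁‖ := add_le_add h1 hφx₁
        _ ≤ 1 / 2 * r + C * ‖f x₁‖ := by gcongr
        _ = r := by rw [hr]; ring
    · refine ⟨w - f x, ?_⟩
      rw [map_sub, hw]
      simp only [hφ]
      abel
  -- the contraction on the subtype
  haveI : Nonempty S := ⟨⟨x₁, hx₁S⟩⟩
  haveI : CompleteSpace S := hSclosed.completeSpace_coe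
  set g : S → S := fun p => ⟨φ p, hmaps p p.2⟩ with hg
  have hgc : ContractingWith (1 / 2 : NNReal) g := by
    constructor
    · rw [← NNReal.coe_lt_coe]; norm_num
    · apply LipschitzWith.of_dist_le_mul
      intro p q
      obtain ⟨hpr, wp, hwp⟩ := hSmem p p.2
      obtain ⟨hqr, wq, hwq⟩ := hSmem q q.2
      have hpq : (p : X) - q ∈ Set.range Q := by
        refine ⟨wp - wq, ?_⟩
        rw [map_sub, hwp, hwq]; abel
      have := hcontr p q (hSball p hpr) (hSball q hqr) hpq
      simp only [Subtype.dist_eq, dist_eq_norm, hg]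
      calc ‖φ (p : X) - φ q‖ ≤ 1 / 2 * ‖(p : X) - q‖ := this
        _ = ((1 / 2 : NNReal) : ℝ) * ‖(p : X) - q‖ := by norm_num
  set xf : S := hgc.fixedPoint g with hxf
  have hfix : g xf = xf := hgc.fixedPoint_isFixedPt
  have hQf0 : Q (f (xf : X)) = 0 := by
    have h1 : (g xf : X) = (xf : X) := by rw [hfix]
    have h2 : (xf : X) - Q (f (xf : X)) = (xf : X) := h1
    have := sub_eq_self.mp h2
    exact this
  have hfx : f (xf : X) = 0 := by
    have := hQright (f (xf : X))
    rw [hQf0, map_zero] at this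
    exact this.symm
  obtain ⟨hxr, hxrange⟩ := hSmem (xf : X) xf.2
  refine ⟨(xf : X), ⟨hfx, hxrange, hSball _ hxr⟩, hxr, ?_⟩
  intro x' ⟨hfx', hx'range, hx'ball⟩
  have hdiff : x' - (xf : X) ∈ Set.range Q := by
    obtain ⟨w1, hw1⟩ := hx'range
    obtain ⟨w2, hw2⟩ := hxrange
    exact ⟨w1 - w2, by rw [map_sub, hw1, hw2]; abel⟩
  have hφx' : φ x' = x' := by simp [hφ, hfx']
  have hφx : φ (xf : X) = (xf : X) := by simp [hφ, hfx]
  have := hcontr x' (xf : X) hx'ball (hSball _ hxr) hdiff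
  rw [hφx', hφx] at this
  have hnn : ‖x' - (xf : X)‖ ≤ 0 := by linarith
  have : x' - (xf : X) = 0 := norm_le_zero_iff.mp hnn
  exact sub_eq_zero.mp this
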